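/- For k ≥ 2, the ℂ-vector space ℂ[[x,y]]/(f, 𝔪·J(f)) for f = x^{k+1} + y^2 and 𝔪 = (x,y), J(f) = (∂f/∂x, ∂f/∂y), has dimension k + 2. -/

import Mathlib

open MvPolynomial

namespace Stmt17Aux

noncomputable section

abbrev R2 := MvPowerSeries (Fin 2) ℂ

/-- index monomials: x^0,…,x^k, y -/
def eIdx (k : ℕ) (i : Fin (k + 2)) : Fin 2 →₀ ℕ :=
  if (i : ℕ) = k + 1 then Finsupp.single 1 1 else Finsupp.single 0 (i : ℕ)

lemma eIdx_injective (k : ℕ) : Function.Injective (eIdx k) := by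
  intro i j hij
  unfold eIdx at hij
  split_ifs at hij with hi hj hj
  · exact Fin.ext (hi.trans hj.symm)
  · have := DFunLike.congr_fun hij (1 : Fin 2)
    simp [Finsupp.single_apply] at this
  · have := DFunLike.congr_fun hij (1 : Fin 2)
    simp [Finsupp.single_apply] at this
  · have := DFunLike.congr_fun hij (0 : Fin 2)
    simp [Finsupp.single_apply] at this
    exact Fin.ext this

def phi (k : ℕ) : R2 →ₗ[ℂ] (Fin (k + 2) → ℂ) :=
  LinearMap.pi fun i => MvPowerSeries.coeff (R := ℂ) (eIdx k i)

lemma phi_apply (k : ℕ) (g : R2) (i : Fin (k + 2)) :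
    phi k g i = MvPowerSeries.coeff (R := ℂ) (eIdx k i) g := rfl

lemma phi_surj (k : ℕ) : Function.Surjective (phi k) := by
  classical
  intro v
  refine ⟨∑ i, MvPowerSeries.monomial (R := ℂ) (eIdx k i) (v i), ?_⟩
  funext j
  rw [phi_apply, map_sum]
  have key : ∀ i : Fin (k+2), MvPowerSeries.coeff (R := ℂ) (eIdx k j)
      (MvPowerSeries.monomial (R := ℂ) (eIdx k i) (v i)) = if i = j then v i else 0 := by
    intro i
    rw [MvPowerSeries.coeff_monomial]
    by_cases h : i = j
    · subst h; simp
    · rw [if_neg (fun hc => h (eIdx_injective k hc.symm)), if_neg h]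
  rw [Finset.sum_congr rfl fun i _ => key i]
  simp

def shiftIf (d : Fin 2 →₀ ℕ) (g : R2) : R2 :=
  fun m => if m 1 = 0 then g (m + d) else 0

def shift (d : Fin 2 →₀ ℕ) (g : R2) : R2 :=
  fun m => g (m + d)

lemma coeff_shiftIf (d n : Fin 2 →₀ ℕ) (g : R2) :
    MvPowerSeries.coeff (R := ℂ) n (shiftIf d g) =
      if n 1 = 0 then MvPowerSeries.coeff (R := ℂ) (n + d) g else 0 := rfl

lemma coeff_shift (d n : Fin 2 →₀ ℕ) (g : R2) :
    MvPowerSeries.coeff (R := ℂ) n (shift d g) = MvPowerSeries.coeff (R := ℂ) (n + d) g := rfl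

lemma decomp (k : ℕ) (g : R2)
    (hx : ∀ a : ℕ, a ≤ k → MvPowerSeries.coeff (R := ℂ) (Finsupp.single 0 a) g = 0)
    (hy : MvPowerSeries.coeff (R := ℂ) (Finsupp.single 1 1) g = 0) :
    g = MvPowerSeries.monomial (R := ℂ) (Finsupp.single 0 (k+1)) 1 * shiftIf (Finsupp.single 0 (k+1)) g
      + MvPowerSeries.monomial (R := ℂ) (Finsupp.single 0 1 + Finsupp.single 1 1) 1 *
          shiftIf (Finsupp.single 0 1 + Finsupp.single 1 1) g
      + MvPowerSeries.monomial (R := ℂ) (Finsupp.single 1 2) 1 * shift (Finsupp.single 1 2) g := by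
  apply MvPowerSeries.ext
  intro m
  rw [map_add, map_add]
  have hm1 : (Finsupp.single 0 (k+1) : Fin 2 →₀ ℕ) ≤ m ↔ k + 1 ≤ m 0 := Finsupp.single_le_iff
  have hm3 : (Finsupp.single 1 2 : Fin 2 →₀ ℕ) ≤ m ↔ 2 ≤ m 1 := Finsupp.single_le_iff
  have hm2 : (Finsupp.single 0 1 + Finsupp.single 1 1 : Fin 2 →₀ ℕ) ≤ m ↔ 1 ≤ m 0 ∧ 1 ≤ m 1 := by
    rw [Finsupp.le_def, Fin.forall_fin_two]
    simp [Finsupp.add_apply, Finsupp.single_apply]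
  have v1 : ((m - Finsupp.single 0 (k+1) : Fin 2 →₀ ℕ)) 1 = m 1 := by
    rw [Finsupp.tsub_apply]; simp [Finsupp.single_apply]
  have v2 : ((m - (Finsupp.single 0 1 + Finsupp.single 1 1) : Fin 2 →₀ ℕ)) 1 = m 1 - 1 := by
    rw [Finsupp.tsub_apply]; simp [Finsupp.add_apply, Finsupp.single_apply]
  have tA : MvPowerSeries.coeff (R := ℂ) m
      (MvPowerSeries.monomial (R := ℂ) (Finsupp.single 0 (k+1)) 1 * shiftIf (Finsupp.single 0 (k+1)) g)
      = if k + 1 ≤ m 0 ∧ m 1 = 0 then MvPowerSeries.coeff (R := ℂ) m g else 0 := by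
    rw [MvPowerSeries.coeff_monomial_mul, coeff_shiftIf, v1]
    by_cases hc : (Finsupp.single 0 (k+1) : Fin 2 →₀ ℕ) ≤ m
    · rw [if_pos hc, tsub_add_cancel_of_le hc, one_mul]
      by_cases h0 : m 1 = 0
      · rw [if_pos h0, if_pos ⟨hm1.mp hc, h0⟩]
      · rw [if_neg h0, if_neg (fun h => h0 h.2)]
    · rw [if_neg hc, if_neg (fun h => hc (hm1.mpr h.1))]
  have tB : MvPowerSeries.coeff (R := ℂ) m
      (MvPowerSeries.monomial (R := ℂ) (Finsupp.single 0 1 + Finsupp.single 1 1) 1 *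
        shiftIf (Finsupp.single 0 1 + Finsupp.single 1 1) g)
      = if 1 ≤ m 0 ∧ m 1 = 1 then MvPowerSeries.coeff (R := ℂ) m g else 0 := by
    rw [MvPowerSeries.coeff_monomial_mul, coeff_shiftIf, v2]
    by_cases hc : (Finsupp.single 0 1 + Finsupp.single 1 1 : Fin 2 →₀ ℕ) ≤ m
    · rw [if_pos hc, tsub_add_cancel_of_le hc, one_mul]
      have hmm := hm2.mp hc
      by_cases h0 : m 1 - 1 = 0
      · rw [if_pos h0, if_pos ⟨hmm.1, by omega⟩]
      · rw [if_neg h0, if_neg (by omega)]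
    · rw [if_neg hc, if_neg (fun h => hc (hm2.mpr ⟨h.1, by omega⟩))]
  have tC : MvPowerSeries.coeff (R := ℂ) m
      (MvPowerSeries.monomial (R := ℂ) (Finsupp.single 1 2) 1 * shift (Finsupp.single 1 2) g)
      = if 2 ≤ m 1 then MvPowerSeries.coeff (R := ℂ) m g else 0 := by
    rw [MvPowerSeries.coeff_monomial_mul, coeff_shift]
    by_cases hc : (Finsupp.single 1 2 : Fin 2 →₀ ℕ) ≤ m
    · rw [if_pos hc, tsub_add_cancel_of_le hc, one_mul, if_pos (hm3.mp hc)]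
    · rw [if_neg hc, if_neg (fun h => hc (hm3.mpr h))]
  rw [tA, tB, tC]
  by_cases h3 : 2 ≤ m 1
  · rw [if_neg (show ¬(k + 1 ≤ m 0 ∧ m 1 = 0) by omega),
      if_neg (show ¬(1 ≤ m 0 ∧ m 1 = 1) by omega), if_pos h3]
    ring
  · by_cases hc1 : m 1 = 1
    · by_cases h0 : 1 ≤ m 0
      · rw [if_neg (show ¬(k + 1 ≤ m 0 ∧ m 1 = 0) by omega), if_pos ⟨h0, hc1⟩, if_neg h3]
        ring
      · have hm : m = Finsupp.single 1 1 := by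
          ext i
          fin_cases i <;> simp [Finsupp.single_apply] <;> omega
        rw [if_neg (show ¬(k + 1 ≤ m 0 ∧ m 1 = 0) by omega),
          if_neg (show ¬(1 ≤ m 0 ∧ m 1 = 1) by omega), if_neg h3, hm, hy]
        ring
    · have hc0 : m 1 = 0 := by omega
      by_cases h0 : k + 1 ≤ m 0
      · rw [if_pos ⟨h0, hc0⟩, if_neg (show ¬(1 ≤ m 0 ∧ m 1 = 1) by omega), if_neg h3]
        ring
      · have hm : m = Finsupp.single 0 (m 0) := by
          ext i
          fin_cases i <;> simp [Finsupp.single_apply] <;> omega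
        rw [if_neg (show ¬(k + 1 ≤ m 0 ∧ m 1 = 0) by omega),
          if_neg (show ¬(1 ≤ m 0 ∧ m 1 = 1) by omega), if_neg h3, hm, hx (m 0) (by omega)]
        ring

lemma mono1 (k : ℕ) : (MvPowerSeries.X 0 : R2) ^ (k+1)
    = MvPowerSeries.monomial (R := ℂ) (Finsupp.single 0 (k+1)) 1 := MvPowerSeries.X_pow_eq 0 (k+1)

lemma mono2 : (MvPowerSeries.X 0 * MvPowerSeries.X 1 : R2)
    = MvPowerSeries.monomial (R := ℂ) (Finsupp.single 0 1 + Finsupp.single 1 1) 1 := by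
  rw [MvPowerSeries.X_def, MvPowerSeries.X_def, MvPowerSeries.monomial_mul_monomial, one_mul]

lemma mono3 : (MvPowerSeries.X 1 : R2) ^ 2
    = MvPowerSeries.monomial (R := ℂ) (Finsupp.single 1 2) 1 := MvPowerSeries.X_pow_eq 1 2

lemma not_le_1 (k : ℕ) (i : Fin (k+2)) :
    ¬ (Finsupp.single 0 (k+1) : Fin 2 →₀ ℕ) ≤ eIdx k i := by
  rw [Finsupp.single_le_iff]
  have hi := i.isLt
  unfold eIdx
  split_ifs with h <;> simp [Finsupp.single_apply] <;> omega

lemma not_le_2 (k : ℕ) (i : Fin (k+2)) :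
    ¬ (Finsupp.single 0 1 + Finsupp.single 1 1 : Fin 2 →₀ ℕ) ≤ eIdx k i := by
  rw [Finsupp.le_def]
  intro h
  have h0 := h 0
  have h1 := h 1
  unfold eIdx at h0 h1
  split_ifs at h0 h1 <;> simp [Finsupp.single_apply, Finsupp.add_apply] at h0 h1

lemma not_le_3 (k : ℕ) (i : Fin (k+2)) :
    ¬ (Finsupp.single 1 2 : Fin 2 →₀ ℕ) ≤ eIdx k i := by
  rw [Finsupp.single_le_iff]
  unfold eIdx
  split_ifs with h <;> simp [Finsupp.single_apply]

lemma coeff_mul_mono_zero (k : ℕ) (i : Fin (k+2)) (p : R2) (d : Fin 2 →₀ ℕ)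
    (hd : ¬ d ≤ eIdx k i) :
    MvPowerSeries.coeff (R := ℂ) (eIdx k i) (p * MvPowerSeries.monomial (R := ℂ) d 1) = 0 := by
  rw [MvPowerSeries.coeff_mul_monomial, if_neg hd]

lemma ker_phi (k : ℕ) :
    LinearMap.ker (phi k) = (Ideal.span
      ({(MvPowerSeries.X 0 : R2) ^ (k+1), MvPowerSeries.X 0 * MvPowerSeries.X 1,
        MvPowerSeries.X 1 ^ 2} : Set R2)).restrictScalars ℂ := by
  apply le_antisymm
  · intro g hg
    have hz : ∀ i : Fin (k+2), MvPowerSeries.coeff (R := ℂ) (eIdx k i) g = 0 := by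
      intro i
      exact congrFun (LinearMap.mem_ker.mp hg) i
    have hx : ∀ a : ℕ, a ≤ k → MvPowerSeries.coeff (R := ℂ) (Finsupp.single 0 a) g = 0 := by
      intro a ha
      have h := hz ⟨a, by omega⟩
      simpa [eIdx, show a ≠ k + 1 by omega] using h
    have hy : MvPowerSeries.coeff (R := ℂ) (Finsupp.single 1 1) g = 0 := by
      have h := hz ⟨k+1, by omega⟩
      simpa [eIdx] using h
    rw [Submodule.restrictScalars_mem, decomp k g hx hy]
    refine add_mem (add_mem ?_ ?_) ?_
    · exact Ideal.mul_mem_right _ _ (Ideal.subset_span (by rw [← mono1]; simp))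
    · exact Ideal.mul_mem_right _ _ (Ideal.subset_span (by rw [← mono2]; simp))
    · exact Ideal.mul_mem_right _ _ (Ideal.subset_span (by rw [← mono3]; simp))
  · intro z hz
    rw [Submodule.restrictScalars_mem] at hz
    rw [Ideal.mem_span_insert] at hz
    obtain ⟨p, w, hw, rfl⟩ := hz
    rw [Ideal.mem_span_insert] at hw
    obtain ⟨q, w', hw', rfl⟩ := hw
    rw [Ideal.mem_span_singleton'] at hw'
    obtain ⟨r, rfl⟩ := hw'
    rw [LinearMap.mem_ker]
    funext i
    rw [phi_apply]
    simp only [map_add]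
    rw [mono1, mono2, mono3,
      coeff_mul_mono_zero k i p _ (not_le_1 k i),
      coeff_mul_mono_zero k i q _ (not_le_2 k i),
      coeff_mul_mono_zero k i r _ (not_le_3 k i)]
    simp

end

end Stmt17Aux

open Stmt17Aux in
/-- For k ≥ 2 and f = x^{k+1} + y², dim_ℂ ℂ[[x,y]]/(f, x·f_x, y·f_x, x·f_y, y·f_y) = k + 2
(the T¹ with section of the A_k plane curve singularity). -/
theorem stmt_17 (k : ℕ) (hk : 2 ≤ k) :
    let f : MvPolynomial (Fin 2) ℂ := X 0 ^ (k + 1) + X 1 ^ 2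
    Module.finrank ℂ (MvPowerSeries (Fin 2) ℂ ⧸
        Ideal.span ({(↑f : MvPowerSeries (Fin 2) ℂ),
          ↑((X 0 : MvPolynomial (Fin 2) ℂ) * pderiv 0 f), ↑((X 1 : MvPolynomial (Fin 2) ℂ) * pderiv 0 f),
          ↑((X 0 : MvPolynomial (Fin 2) ℂ) * pderiv 1 f), ↑((X 1 : MvPolynomial (Fin 2) ℂ) * pderiv 1 f)} : Set (MvPowerSeries (Fin 2) ℂ)))
      = k + 2 := by
  intro f
  have hA : ((f : MvPolynomial (Fin 2) ℂ) : MvPowerSeries (Fin 2) ℂ)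
      = MvPowerSeries.X 0 ^ (k+1) + MvPowerSeries.X 1 ^ 2 := by
    show ((X 0 ^ (k + 1) + X 1 ^ 2 : MvPolynomial (Fin 2) ℂ) : MvPowerSeries (Fin 2) ℂ) = _
    rw [coe_add, coe_pow, coe_pow, coe_X, coe_X]
  have hp0 : pderiv 0 f = C ((k:ℂ)+1) * X 0 ^ k := by
    show pderiv 0 (X 0 ^ (k + 1) + X 1 ^ 2 : MvPolynomial (Fin 2) ℂ) = _
    rw [map_add, pderiv_pow, pderiv_pow]
    simp [pderiv_X_self, pderiv_X_of_ne (show (1 : Fin 2) ≠ 0 by decide)]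
  have hp1 : pderiv 1 f = C (2:ℂ) * X 1 := by
    show pderiv 1 (X 0 ^ (k + 1) + X 1 ^ 2 : MvPolynomial (Fin 2) ℂ) = _
    rw [map_add, pderiv_pow, pderiv_pow]
    simp [pderiv_X_self, pderiv_X_of_ne (show (0 : Fin 2) ≠ 1 by decide)]
    exact (map_ofNat C 2).symm
  have hB : (↑((X 0 : MvPolynomial (Fin 2) ℂ) * pderiv 0 f) : MvPowerSeries (Fin 2) ℂ)
      = MvPowerSeries.C (σ := Fin 2) (R := ℂ) ((k:ℂ)+1) * MvPowerSeries.X 0 ^ (k+1) := by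
    rw [hp0, show (X 0 : MvPolynomial (Fin 2) ℂ) * (C ((k:ℂ)+1) * X 0 ^ k)
      = C ((k:ℂ)+1) * X 0 ^ (k+1) by ring]
    rw [coe_mul, coe_pow, coe_X, coe_C]
  have hC : (↑((X 1 : MvPolynomial (Fin 2) ℂ) * pderiv 0 f) : MvPowerSeries (Fin 2) ℂ)
      = MvPowerSeries.C (σ := Fin 2) (R := ℂ) ((k:ℂ)+1) * (MvPowerSeries.X 0 ^ k * MvPowerSeries.X 1) := by
    rw [hp0, show (X 1 : MvPolynomial (Fin 2) ℂ) * (C ((k:ℂ)+1) * X 0 ^ k)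
      = C ((k:ℂ)+1) * (X 0 ^ k * X 1) by ring]
    rw [coe_mul, coe_mul, coe_pow, coe_X, coe_X, coe_C]
  have hD : (↑((X 0 : MvPolynomial (Fin 2) ℂ) * pderiv 1 f) : MvPowerSeries (Fin 2) ℂ)
      = MvPowerSeries.C (σ := Fin 2) (R := ℂ) (2:ℂ) * (MvPowerSeries.X 0 * MvPowerSeries.X 1) := by
    rw [hp1, show (X 0 : MvPolynomial (Fin 2) ℂ) * (C (2:ℂ) * X 1)
      = C (2:ℂ) * (X 0 * X 1) by ring]
    rw [coe_mul, coe_mul, coe_X, coe_X, coe_C]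
  have hE : (↑((X 1 : MvPolynomial (Fin 2) ℂ) * pderiv 1 f) : MvPowerSeries (Fin 2) ℂ)
      = MvPowerSeries.C (σ := Fin 2) (R := ℂ) (2:ℂ) * MvPowerSeries.X 1 ^ 2 := by
    rw [hp1, show (X 1 : MvPolynomial (Fin 2) ℂ) * (C (2:ℂ) * X 1)
      = C (2:ℂ) * X 1 ^ 2 by ring]
    rw [coe_mul, coe_pow, coe_X, coe_C]
  rw [hA, hB, hC, hD, hE]
  set x : R2 := MvPowerSeries.X 0 with hxdef
  set y : R2 := MvPowerSeries.X 1 with hydef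
  have hspan : Ideal.span ({x ^ (k+1) + y ^ 2,
        MvPowerSeries.C (σ := Fin 2) (R := ℂ) ((k:ℂ)+1) * x ^ (k+1),
        MvPowerSeries.C (σ := Fin 2) (R := ℂ) ((k:ℂ)+1) * (x ^ k * y),
        MvPowerSeries.C (σ := Fin 2) (R := ℂ) (2:ℂ) * (x * y),
        MvPowerSeries.C (σ := Fin 2) (R := ℂ) (2:ℂ) * y ^ 2} : Set R2)
      = Ideal.span ({x ^ (k+1), x * y, y ^ 2} : Set R2) := by
    obtain ⟨j, rfl⟩ : ∃ j, k = j + 2 := ⟨k - 2, by omega⟩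
    apply le_antisymm
    · rw [Ideal.span_le]
      have hx' : x ^ (j+2+1) ∈ Ideal.span ({x ^ (j+2+1), x * y, y ^ 2} : Set R2) :=
        Ideal.subset_span (by simp)
      have hxy : x * y ∈ Ideal.span ({x ^ (j+2+1), x * y, y ^ 2} : Set R2) :=
        Ideal.subset_span (by simp)
      have hy2 : y ^ 2 ∈ Ideal.span ({x ^ (j+2+1), x * y, y ^ 2} : Set R2) :=
        Ideal.subset_span (by simp)
      rintro z hz
      simp only [Set.mem_insert_iff, Set.mem_singleton_iff] at hz
      rcases hz with rfl | rfl | rfl | rfl | rfl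
      · exact add_mem hx' hy2
      · exact Ideal.mul_mem_left _ _ hx'
      · rw [show MvPowerSeries.C (σ := Fin 2) (R := ℂ) (((j+2:ℕ):ℂ)+1) * (x ^ (j+2) * y)
          = (MvPowerSeries.C (σ := Fin 2) (R := ℂ) (((j+2:ℕ):ℂ)+1) * x ^ (j+1)) * (x * y) by ring]
        exact Ideal.mul_mem_left _ _ hxy
      · exact Ideal.mul_mem_left _ _ hxy
      · exact Ideal.mul_mem_left _ _ hy2
    · rw [Ideal.span_le]
      set J := Ideal.span ({x ^ (j+2+1) + y ^ 2,
        MvPowerSeries.C (σ := Fin 2) (R := ℂ) (((j+2:ℕ):ℂ)+1) * x ^ (j+2+1),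
        MvPowerSeries.C (σ := Fin 2) (R := ℂ) (((j+2:ℕ):ℂ)+1) * (x ^ (j+2) * y),
        MvPowerSeries.C (σ := Fin 2) (R := ℂ) (2:ℂ) * (x * y),
        MvPowerSeries.C (σ := Fin 2) (R := ℂ) (2:ℂ) * y ^ 2} : Set R2) with hJ
      have hf' : x ^ (j+2+1) + y ^ 2 ∈ J := Ideal.subset_span (by simp)
      have hg4 : MvPowerSeries.C (σ := Fin 2) (R := ℂ) (2:ℂ) * y ^ 2 ∈ J := Ideal.subset_span (by simp)
      have hg3 : MvPowerSeries.C (σ := Fin 2) (R := ℂ) (2:ℂ) * (x * y) ∈ J := Ideal.subset_span (by simp)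
      have hhalf : (2⁻¹ : ℂ) * 2 = 1 := by norm_num
      have hy2 : y ^ 2 ∈ J := by
        rw [show y ^ 2 = MvPowerSeries.C (σ := Fin 2) (R := ℂ) (2⁻¹:ℂ) *
            (MvPowerSeries.C (σ := Fin 2) (R := ℂ) (2:ℂ) * y ^ 2) by
          rw [← mul_assoc, ← map_mul, hhalf, map_one, one_mul]]
        exact Ideal.mul_mem_left _ _ hg4
      have hxy : x * y ∈ J := by
        rw [show x * y = MvPowerSeries.C (σ := Fin 2) (R := ℂ) (2⁻¹:ℂ) *
            (MvPowerSeries.C (σ := Fin 2) (R := ℂ) (2:ℂ) * (x * y)) by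
          rw [← mul_assoc, ← map_mul, hhalf, map_one, one_mul]]
        exact Ideal.mul_mem_left _ _ hg3
      have hxk : x ^ (j+2+1) ∈ J := by
        rw [show x ^ (j+2+1) = (x ^ (j+2+1) + y ^ 2) - y ^ 2 by ring]
        exact sub_mem hf' hy2
      rintro z hz
      simp only [Set.mem_insert_iff, Set.mem_singleton_iff] at hz
      rcases hz with rfl | rfl | rfl
      · exact hxk
      · exact hxy
      · exact hy2
  rw [hspan]
  rw [← LinearEquiv.finrank_eq (Submodule.Quotient.restrictScalarsEquiv ℂ
    (Ideal.span ({x ^ (k+1), x * y, y ^ 2} : Set R2)))]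
  rw [← ker_phi k]
  rw [LinearEquiv.finrank_eq (LinearMap.quotKerEquivOfSurjective (phi k) (phi_surj k))]
  simp [Module.finrank_pi]
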